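/- arXiv:1708.03709 — 3 statements merged into one kernel-verified Lean document; each statement's English description precedes it below -/
import Mathlib

section
/- Let G be a group with unique roots and let c ∈ G be an element of infinite order. Then for every nonzero integer n, the normalizer in G of the cyclic subgroup ⟨c^n⟩ equals the normalizer in G of ⟨c⟩. -/
theorem unique_roots_normalizer_zpowers_pow (G : Type*) [Group G]
    (h : ∀ m : ℕ, 0 < m → ∀ f g : G, f ^ m = g ^ m → f = g)
    (c : G) (hc : ¬ IsOfFinOrder c) (n : ℤ) (hn : n ≠ 0) :
    Subgroup.normalizer (Subgroup.zpowers (c ^ n) : Set G) = Subgroup.normalizer (Subgroup.zpowers c : Set G) := by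
  -- conjugation commutes with integer powers
  have conj : ∀ (g x : G) (k : ℤ), (g * x * g⁻¹) ^ k = g * x ^ k * g⁻¹ := by
    intro g x k
    rw [← MulAut.conj_apply, ← map_zpow, MulAut.conj_apply]
  -- unique roots for integer exponents
  have h' : ∀ m : ℤ, m ≠ 0 → ∀ f g : G, f ^ m = g ^ m → f = g := by
    intro m hm f g hfg
    rcases lt_or_gt_of_ne hm with hneg | hpos
    · have h2 : f⁻¹ ^ (-m) = g⁻¹ ^ (-m) := by
        rw [inv_zpow, inv_zpow, zpow_neg, zpow_neg, hfg]
      rw [← Int.toNat_of_nonneg (le_of_lt (by omega : (0:ℤ) < -m)), zpow_natCast,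
        zpow_natCast] at h2
      exact inv_injective (h (-m).toNat (by omega) _ _ h2)
    · rw [← Int.toNat_of_nonneg (le_of_lt hpos), zpow_natCast, zpow_natCast] at hfg
      exact h m.toNat (by omega) _ _ hfg
  -- L1: if g normalizes ⟨c^n⟩ then g c g⁻¹ ∈ ⟨c⟩
  have L1 : ∀ g : G, g ∈ Subgroup.normalizer (Subgroup.zpowers (c ^ n) : Set G) →
      g * c * g⁻¹ ∈ Subgroup.zpowers c := by
    intro g hg
    rw [Subgroup.mem_normalizer_iff] at hg
    have hmem : g * c ^ n * g⁻¹ ∈ Subgroup.zpowers (c ^ n) :=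
      (hg (c ^ n)).mp (Subgroup.mem_zpowers _)
    rw [Subgroup.mem_zpowers_iff] at hmem
    obtain ⟨k, hk⟩ := hmem
    have hk' : (c ^ k) ^ n = (g * c * g⁻¹) ^ n := by
      rw [conj, ← hk, ← zpow_mul, ← zpow_mul, mul_comm]
    rw [Subgroup.mem_zpowers_iff]
    exact ⟨k, (h' n hn _ _ hk')⟩
  -- L2: if g c g⁻¹ and g⁻¹ c g are in ⟨c⟩ then g normalizes ⟨c^m⟩ for any m
  have L2 : ∀ (m : ℤ) (g : G), g * c * g⁻¹ ∈ Subgroup.zpowers c →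
      g⁻¹ * c * g ∈ Subgroup.zpowers c → g ∈ Subgroup.normalizer (Subgroup.zpowers (c ^ m) : Set G) := by
    intro m g h1 h2
    rw [Subgroup.mem_zpowers_iff] at h1 h2
    obtain ⟨e, he⟩ := h1
    obtain ⟨e', he'⟩ := h2
    rw [Subgroup.mem_normalizer_iff]
    intro x
    rw [Subgroup.mem_zpowers_iff, Subgroup.mem_zpowers_iff]
    constructor
    · rintro ⟨k, rfl⟩
      refine ⟨e * k, ?_⟩
      have : g * (c ^ m) ^ k * g⁻¹ = (g * c * g⁻¹) ^ (m * k) := by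
        rw [conj, zpow_mul]
      rw [this, ← he, ← zpow_mul, ← zpow_mul]
      congr 1; ring
    · rintro ⟨k, hk⟩
      refine ⟨e' * k, ?_⟩
      have hx : x = g⁻¹ * (c ^ m) ^ k * g := by
        rw [hk]; group
      have : g⁻¹ * (c ^ m) ^ k * g = (g⁻¹ * c * g) ^ (m * k) := by
        have := conj g⁻¹ c (m * k)
        rw [inv_inv] at this
        rw [this, zpow_mul]
      rw [hx, this, ← he', ← zpow_mul, ← zpow_mul]
      congr 1; ring
  ext g
  constructor
  · intro hg
    have hg' : g⁻¹ ∈ Subgroup.normalizer (Subgroup.zpowers (c ^ n) : Set G) := inv_mem hg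
    have h1 := L1 g hg
    have h2 := L1 g⁻¹ hg'
    rw [inv_inv] at h2
    have := L2 1 g h1 h2
    rwa [zpow_one] at this
  · intro hg
    rw [Subgroup.mem_normalizer_iff] at hg
    have h1 : g * c * g⁻¹ ∈ Subgroup.zpowers c := (hg c).mp (Subgroup.mem_zpowers _)
    have h2 : g⁻¹ * c * g ∈ Subgroup.zpowers c := by
      apply (hg (g⁻¹ * c * g)).mpr
      have hd : g * (g⁻¹ * c * g) * g⁻¹ = c := by group
      rw [hd]
      exact Subgroup.mem_zpowers c
    exact L2 n g h1 h2
end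

section
/- Let G be a torsion-free group and C ◁ G an infinite cyclic normal subgroup. Then every finite subgroup of the quotient G/C is cyclic. -/
theorem finite_subgroups_of_quotient_by_infinite_cyclic_are_cyclic
    (G : Type*) [Group G]
    (htf : ∀ g : G, IsOfFinOrder g → g = 1)
    (C : Subgroup G) [C.Normal]
    (hC : ∃ c : G, ¬ IsOfFinOrder c ∧ C = Subgroup.zpowers c) :
    ∀ F : Subgroup (G ⧸ C), Finite F → IsCyclic F := by
  obtain ⟨c, hc, rfl⟩ := hC
  intro F hF
  set C := Subgroup.zpowers c with hCdef
  set V := F.comap (QuotientGroup.mk' C) with hVdef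
  have hzinj : Function.Injective fun n : ℤ => c ^ n :=
    injective_zpow_iff_not_isOfFinOrder.mpr hc
  -- every element of V has a positive power in C
  have hpow : ∀ g : G, g ∈ V → ∃ n : ℕ, 0 < n ∧ g ^ n ∈ C := by
    intro g hg
    have hx : IsOfFinOrder (QuotientGroup.mk' C g) := by
      have h1 : IsOfFinOrder (⟨QuotientGroup.mk' C g, hg⟩ : F) := isOfFinOrder_of_finite _
      obtain ⟨n, hn, hgn⟩ := isOfFinOrder_iff_pow_eq_one.mp h1
      refine isOfFinOrder_iff_pow_eq_one.mpr ⟨n, hn, ?_⟩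
      have := congrArg Subtype.val hgn
      simpa only [SubmonoidClass.coe_pow, OneMemClass.coe_one] using this
    obtain ⟨n, hn, hgn⟩ := isOfFinOrder_iff_pow_eq_one.mp hx
    refine ⟨n, hn, ?_⟩
    rwa [← map_pow, ← MonoidHom.mem_ker, QuotientGroup.ker_mk'] at hgn
  -- c is central in V
  have hcent : ∀ g : G, g ∈ V → g * c = c * g := by
    intro g hg
    obtain ⟨k, hk0⟩ :=
      (‹C.Normal›.conj_mem c (Subgroup.mem_zpowers c) g : g * c * g⁻¹ ∈ C)
    obtain ⟨m, hm0⟩ :=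
      (‹C.Normal›.conj_mem c (Subgroup.mem_zpowers c) g⁻¹ : g⁻¹ * c * g⁻¹⁻¹ ∈ C)
    have hk : c ^ k = g * c * g⁻¹ := hk0
    have hm : c ^ m = g⁻¹ * c * g⁻¹⁻¹ := hm0
    have hck : (c : G) ^ (m * k) = c ^ (1 : ℤ) := by
      rw [zpow_one, zpow_mul, hm, conj_zpow, hk]
      group
    have hmk : m * k = 1 := hzinj hck
    rcases Int.isUnit_iff.mp (IsUnit.of_mul_eq_one (a := k) m (by rw [mul_comm]; exact hmk)) with h1 | h1
    · rw [h1, zpow_one] at hk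
      have h2 : c * g = g * c * g⁻¹ * g := by rw [← hk]
      rw [h2]; group
    · exfalso
      rw [h1] at hk
      obtain ⟨n, hn, hgn⟩ := hpow g hg
      obtain ⟨j, hj0⟩ := hgn
      have hj : c ^ j = g ^ n := hj0
      have hconj : g * c ^ j * g⁻¹ = c ^ (-j) := by
        rw [show g * c ^ j * g⁻¹ = (g * c * g⁻¹) ^ j by rw [conj_zpow], ← hk]
        rw [← zpow_mul]
        congr 1
        ring
      have hgj : g * c ^ j * g⁻¹ = c ^ j := by
        rw [hj]; group
      have hjj : j = -j := hzinj (hgj ▸ hconj : (c:G) ^ j = c ^ (-j))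
      have hj0' : j = 0 := by omega
      rw [hj0'] at hj
      have hgn1 : g ^ n = 1 := by rw [← hj]; simp
      have hg1 : g = 1 := htf g (isOfFinOrder_iff_pow_eq_one.mpr ⟨n, hn, hgn1⟩)
      rw [hg1] at hk
      have h3 : c ^ (-1 : ℤ) = c ^ (1 : ℤ) := by
        rw [hk]; group
      have h4 : (-1 : ℤ) = 1 := hzinj h3
      omega
  -- now work inside the subtype H := ↥V
  set H := ↥V
  letI : Group H := Subgroup.toGroup V
  letI : Bracket H H := commutatorElement
  -- the projection V →* F and its surjectivity
  let φ : H →* F := MonoidHom.codRestrict ((QuotientGroup.mk' C).comp V.subtype) F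
    (fun v => v.2)
  have hφsurj : Function.Surjective φ := by
    rintro ⟨x, hx⟩
    obtain ⟨g, rfl⟩ := QuotientGroup.mk'_surjective C x
    exact ⟨⟨g, hx⟩, rfl⟩
  have hkerφ : MonoidHom.ker φ = C.subgroupOf V := by
    ext v
    rw [MonoidHom.mem_ker, Subgroup.mem_subgroupOf]
    constructor
    · intro hv
      have h1 : QuotientGroup.mk' C (v : G) = 1 := congrArg Subtype.val hv
      exact (QuotientGroup.eq_one_iff _).mp h1
    · intro hv
      exact Subtype.ext ((QuotientGroup.eq_one_iff _).mpr hv)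
  -- V/C.subgroupOf V is finite
  have hfinq : Finite (H ⧸ C.subgroupOf V) := by
    rw [← hkerφ]
    exact Finite.of_equiv _ (QuotientGroup.quotientKerEquivRange φ).symm.toEquiv
  -- C.subgroupOf V is contained in the center of H
  have hsub : C.subgroupOf V ≤ Subgroup.center H := by
    intro v hmem
    rw [Subgroup.mem_subgroupOf] at hmem
    obtain ⟨k, hk0⟩ := hmem
    have hk : c ^ k = (v : G) := hk0
    rw [Subgroup.mem_center_iff]
    intro g
    ext
    show (g : G) * v = (v : G) * g
    rw [← hk]
    have hco : Commute (g : G) c := hcent g g.2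
    exact (hco.zpow_right k).eq
  -- the center has finite index, so H/center is finite
  haveI : (C.subgroupOf V).FiniteIndex := Subgroup.finiteIndex_of_finite_quotient
  haveI : (Subgroup.center H).FiniteIndex := Subgroup.finiteIndex_of_le hsub
  haveI hfinz : Finite (H ⧸ Subgroup.center H) := Subgroup.finite_quotient_of_finiteIndex
  -- commutators depend only on cosets mod the center
  have key : ∀ (g h z w : H), z ∈ Subgroup.center H → w ∈ Subgroup.center H →
      ⁅g * z, h * w⁆ = ⁅g, h⁆ := by
    intro g h z w hz hw
    have hz' := Subgroup.mem_center_iff.mp hz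
    have hw' := Subgroup.mem_center_iff.mp hw
    have hzc : ∀ x : H, z * x * z⁻¹ = x := by
      intro x; rw [← hz' x]; group
    have hwc : ∀ x : H, w * x * w⁻¹ = x := by
      intro x; rw [← hw' x]; group
    calc ⁅g * z, h * w⁆
        = g * (z * (h * w) * z⁻¹) * g⁻¹ * (w⁻¹ * h⁻¹) := by
          simp only [commutatorElement_def, mul_inv_rev]; group
      _ = g * (h * w) * g⁻¹ * (w⁻¹ * h⁻¹) := by rw [hzc]
      _ = g * h * (w * g⁻¹ * w⁻¹) * h⁻¹ := by group
      _ = g * h * g⁻¹ * h⁻¹ := by rw [hwc]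
      _ = ⁅g, h⁆ := (commutatorElement_def g h).symm
  -- hence the commutator set is finite
  have hcsfin : (commutatorSet H).Finite := by
    have hss : commutatorSet H ⊆ Set.range
        (fun p : (H ⧸ Subgroup.center H) × (H ⧸ Subgroup.center H) =>
          ⁅p.1.out, p.2.out⁆) := by
      rintro x ⟨g, h, rfl⟩
      refine ⟨(QuotientGroup.mk g, QuotientGroup.mk h), ?_⟩
      obtain ⟨z, hz⟩ := QuotientGroup.mk_out_eq_mul (Subgroup.center H) g
      obtain ⟨w, hw⟩ := QuotientGroup.mk_out_eq_mul (Subgroup.center H) h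
      simp only [hz, hw]
      exact key g h z w z.2 w.2
    exact Set.Finite.subset (Set.finite_range _) hss
  haveI : Finite (commutatorSet H) := hcsfin.to_subtype
  -- Schur: the commutator subgroup of H is finite; H torsion-free gives H abelian
  haveI hfc : Finite (_root_.commutator H) := inferInstance
  have htfH : ∀ v : H, IsOfFinOrder v → v = 1 := by
    intro v hv
    obtain ⟨n, hn, hvn⟩ := isOfFinOrder_iff_pow_eq_one.mp hv
    have h1 : (v : G) ^ n = 1 := by
      have := congrArg Subtype.val hvn
      exact this
    exact Subtype.ext (htf v (isOfFinOrder_iff_pow_eq_one.mpr ⟨n, hn, h1⟩))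
  have hcomm : ∀ a b : H, a * b = b * a := by
    intro a b
    have hmem : ⁅a, b⁆ ∈ _root_.commutator H :=
      Subgroup.commutator_mem_commutator (Subgroup.mem_top a) (Subgroup.mem_top b)
    have hfo : IsOfFinOrder (⟨⁅a, b⁆, hmem⟩ : _root_.commutator H) :=
      isOfFinOrder_of_finite _
    obtain ⟨n, hn, hvn⟩ := isOfFinOrder_iff_pow_eq_one.mp hfo
    have h1 : ⁅a, b⁆ ^ n = 1 := by
      have := congrArg Subtype.val hvn
      simpa only [SubmonoidClass.coe_pow, OneMemClass.coe_one] using this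
    have h2 : ⁅a, b⁆ = 1 := htfH _ (isOfFinOrder_iff_pow_eq_one.mpr ⟨n, hn, h1⟩)
    exact commutatorElement_eq_one_iff_mul_comm.mp h2
  -- the n-th power map is an injective homomorphism of H into C
  set n := Nat.card F with hn
  have hnpos : 0 < n := Nat.card_pos
  have hmemC : ∀ v : H, ((v : G)) ^ n ∈ C := by
    intro v
    have h1 : (⟨QuotientGroup.mk' C (v : G), v.2⟩ : F) ^ n = 1 := pow_card_eq_one'
    have h2 : ((QuotientGroup.mk' C (v : G)) : G ⧸ C) ^ n = 1 := by
      have := congrArg Subtype.val h1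
      simpa only [SubmonoidClass.coe_pow, OneMemClass.coe_one] using this
    rwa [← map_pow, ← MonoidHom.mem_ker, QuotientGroup.ker_mk'] at h2
  let θ : H →* ↥C := MonoidHom.codRestrict
    { toFun := fun v : H => (v : G) ^ n
      map_one' := by simp
      map_mul' := by
        intro a b
        show ((a * b : H) : G) ^ n = (a : G) ^ n * (b : G) ^ n
        have hab : Commute (a : G) (b : G) := congrArg Subtype.val (hcomm a b)
        exact hab.mul_pow n } C (fun v => hmemC v)
  have hθinj : Function.Injective θ := by
    intro a b hab
    have h1 : (a : G) ^ n = (b : G) ^ n := congrArg Subtype.val hab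
    have h2 : (a * b⁻¹ : H) ^ n = 1 := by
      have hc2 : Commute a b⁻¹ := hcomm a b⁻¹
      have h3 : (a * b⁻¹ : H) ^ n = a ^ n * (b ^ n)⁻¹ := by
        rw [hc2.mul_pow n, ← inv_pow]
      have h5 : a ^ n = b ^ n := Subtype.ext (by
        exact h1)
      rw [h3, h5]
      group
    have h4 := htfH _ (isOfFinOrder_iff_pow_eq_one.mpr ⟨n, hnpos, h2⟩)
    rwa [mul_inv_eq_one] at h4
  -- C is cyclic, hence so are H and F
  haveI : IsCyclic ↥C := by
    refine ⟨⟨⟨c, Subgroup.mem_zpowers c⟩, ?_⟩⟩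
    rintro ⟨x, hx⟩
    obtain ⟨k, hk0⟩ := hx
    have hk : c ^ k = x := hk0
    refine Subgroup.mem_zpowers_iff.mpr ⟨k, Subtype.ext ?_⟩
    simpa only [SubgroupClass.coe_zpow] using hk
  haveI : IsCyclic ↥θ.range := Subgroup.isCyclic _
  haveI : IsCyclic H :=
    isCyclic_of_surjective (MonoidHom.ofInjective hθinj).symm.toMonoidHom
      (MonoidHom.ofInjective hθinj).symm.surjective
  exact isCyclic_of_surjective φ hφsurj
end

section
/- Let G be a group with unique roots and let c, d ∈ G be elements of infinite order such that ⟨c⟩ ∩ ⟨d⟩ is infinite. Then N_G(⟨c⟩) = N_G(⟨d⟩). -/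
private lemma zroot {G : Type*} [Group G]
    (h : ∀ m : ℕ, 0 < m → ∀ f g : G, f ^ m = g ^ m → f = g)
    (n : ℤ) (hn : n ≠ 0) (f g : G) (hfg : f ^ n = g ^ n) : f = g := by
  rcases hn.lt_or_gt with h1 | h1
  · have h2 : f ^ (-n) = g ^ (-n) := by rw [zpow_neg, zpow_neg, hfg]
    have h3 : f ^ (-n).toNat = g ^ (-n).toNat := by
      rw [← zpow_natCast, ← zpow_natCast, Int.toNat_of_nonneg (by omega : (0:ℤ) ≤ -n)]
      exact h2
    exact h _ (by omega) _ _ h3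
  · have h3 : f ^ n.toNat = g ^ n.toNat := by
      rw [← zpow_natCast, ← zpow_natCast, Int.toNat_of_nonneg h1.le]
      exact hfg
    exact h _ (by omega) _ _ h3

private lemma conj_zpow_aux {G : Type*} [Group G] (g x : G) (n : ℤ) :
    g * x ^ n * g⁻¹ = (g * x * g⁻¹) ^ n := by
  simpa using (map_zpow (MulAut.conj g) x n).symm

private lemma normalizer_zpowers_pow_aux {G : Type*} [Group G]
    (h : ∀ m : ℕ, 0 < m → ∀ f g : G, f ^ m = g ^ m → f = g)
    (x : G) (n : ℤ) (hn : n ≠ 0) :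
    Subgroup.normalizer (Subgroup.zpowers x : Set G) = Subgroup.normalizer (Subgroup.zpowers (x ^ n) : Set G) := by
  ext g
  simp only [Subgroup.mem_normalizer_iff, Subgroup.mem_zpowers_iff]
  constructor
  · intro hg
    obtain ⟨k, hk⟩ := (hg x).mp ⟨1, zpow_one x⟩
    obtain ⟨m, hm⟩ := (hg (g⁻¹ * x * g)).mpr ⟨1, by rw [zpow_one]; group⟩
    intro y
    constructor
    · rintro ⟨j, rfl⟩
      refine ⟨k * j, ?_⟩
      calc (x ^ n) ^ (k * j) = (x ^ k) ^ (n * j) := by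
            rw [← zpow_mul, ← zpow_mul]; ring_nf
        _ = (g * x * g⁻¹) ^ (n * j) := by rw [hk]
        _ = g * x ^ (n * j) * g⁻¹ := (conj_zpow_aux g x (n * j)).symm
        _ = g * (x ^ n) ^ j * g⁻¹ := by rw [zpow_mul]
    · rintro ⟨j, hj⟩
      refine ⟨m * j, ?_⟩
      have h1 : y = g⁻¹ * (x ^ n) ^ j * g := by rw [hj]; group
      rw [h1]
      calc (x ^ n) ^ (m * j) = (x ^ m) ^ (n * j) := by
            rw [← zpow_mul, ← zpow_mul]; ring_nf
        _ = (g⁻¹ * x * g) ^ (n * j) := by rw [hm]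
        _ = g⁻¹ * x ^ (n * j) * g := by
            have := (conj_zpow_aux g⁻¹ x (n * j)).symm
            simpa using this
        _ = g⁻¹ * (x ^ n) ^ j * g := by rw [zpow_mul]
  · intro hg
    obtain ⟨k, hk⟩ := (hg (x ^ n)).mp ⟨1, zpow_one _⟩
    obtain ⟨m, hm⟩ := (hg (g⁻¹ * x ^ n * g)).mpr ⟨1, by rw [zpow_one]; group⟩
    have hk2 : g * x * g⁻¹ = x ^ k := by
      refine zroot h n hn _ _ ?_
      calc (g * x * g⁻¹) ^ n = g * x ^ n * g⁻¹ := (conj_zpow_aux g x n).symm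
        _ = (x ^ n) ^ k := hk.symm
        _ = (x ^ k) ^ n := by rw [← zpow_mul, ← zpow_mul]; ring_nf
    have hm2 : g⁻¹ * x * g = x ^ m := by
      refine zroot h n hn _ _ ?_
      calc (g⁻¹ * x * g) ^ n = g⁻¹ * x ^ n * g := by
            have := (conj_zpow_aux g⁻¹ x n).symm
            simpa using this
        _ = (x ^ n) ^ m := hm.symm
        _ = (x ^ m) ^ n := by rw [← zpow_mul, ← zpow_mul]; ring_nf
    intro y
    constructor
    · rintro ⟨j, rfl⟩
      refine ⟨k * j, ?_⟩
      calc x ^ (k * j) = (x ^ k) ^ j := by rw [zpow_mul]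
        _ = (g * x * g⁻¹) ^ j := by rw [hk2]
        _ = g * x ^ j * g⁻¹ := (conj_zpow_aux g x j).symm
    · rintro ⟨j, hj⟩
      refine ⟨m * j, ?_⟩
      have h1 : y = g⁻¹ * x ^ j * g := by rw [hj]; group
      rw [h1]
      calc x ^ (m * j) = (x ^ m) ^ j := by rw [zpow_mul]
        _ = (g⁻¹ * x * g) ^ j := by rw [hm2]
        _ = g⁻¹ * x ^ j * g := by
            have := (conj_zpow_aux g⁻¹ x j).symm
            simpa using this

theorem normalizer_eq_of_infinite_inter (G : Type*) [Group G]
    (h : ∀ m : ℕ, 0 < m → ∀ f g : G, f ^ m = g ^ m → f = g)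
    (c d : G) (hc : ¬ IsOfFinOrder c) (hd : ¬ IsOfFinOrder d)
    (hcd : ((Subgroup.zpowers c ⊓ Subgroup.zpowers d : Subgroup G) : Set G).Infinite) :
    Subgroup.normalizer (Subgroup.zpowers c : Set G) = Subgroup.normalizer (Subgroup.zpowers d : Set G) := by
  obtain ⟨x, hx, hx1⟩ := (hcd.diff (Set.finite_singleton 1)).nonempty
  simp only [Set.mem_singleton_iff] at hx1
  have hxm : x ∈ Subgroup.zpowers c ⊓ Subgroup.zpowers d := hx
  obtain ⟨⟨s, hs⟩, ⟨t, ht⟩⟩ := hxm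
  simp only at hs ht
  have hs0 : s ≠ 0 := by rintro rfl; simp at hs; exact hx1 hs.symm
  have ht0 : t ≠ 0 := by rintro rfl; simp at ht; exact hx1 ht.symm
  rw [normalizer_zpowers_pow_aux h c s hs0, normalizer_zpowers_pow_aux h d t ht0,
    hs, ht]
end
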